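/- For every integer N ≥ 1, one has N · Σ_{k=0}^{N} C(N,k) log₂( (N+1)² / ((N+1−k)(k+1)) ) ≥ 2 · Σ_{k=0}^{N} C(N,k) log₂ C(N,k); equivalently, Σ_{k=0}^{N} C(N,k) log₂( (N+1)^{2N} / ( ((N+1−k)(k+1))^N · C(N,k)² ) ) ≥ 0. -/

import Mathlib

open Finset

/-- `(3m+1)·C(2m,m)² ≤ 16^m`, by induction. -/
lemma aux_central_binom_sq : ∀ m : ℕ, (3*m+1) * (Nat.centralBinom m)^2 ≤ 16^m := by
  intro m
  induction m with
  | zero => simp [Nat.centralBinom]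
  | succ m ih =>
    have key : (m+1) * Nat.centralBinom (m+1) = 2 * (2*m+1) * Nat.centralBinom m :=
      Nat.succ_mul_centralBinom_succ m
    have h2 : ((m+1) * Nat.centralBinom (m+1))^2 = (2*(2*m+1)*Nat.centralBinom m)^2 := by
      rw [key]
    have hpos : 0 < (m+1)^2 := by positivity
    have step : (3*m+4)*(2*(2*m+1))^2 ≤ 16 * (m+1)^2 * (3*m+1) := by nlinarith
    have : (m+1)^2 * ((3*(m+1)+1) * (Nat.centralBinom (m+1))^2)
        ≤ (m+1)^2 * 16^(m+1) := by
      calc (m+1)^2 * ((3*(m+1)+1) * (Nat.centralBinom (m+1))^2)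
          = (3*m+4) * (((m+1) * Nat.centralBinom (m+1))^2) := by ring_nf
        _ = (3*m+4) * (2*(2*m+1))^2 * (Nat.centralBinom m)^2 := by rw [h2]; ring
        _ ≤ 16 * (m+1)^2 * (3*m+1) * (Nat.centralBinom m)^2 :=
            Nat.mul_le_mul_right _ step
        _ = 16 * (m+1)^2 * ((3*m+1) * (Nat.centralBinom m)^2) := by ring
        _ ≤ 16 * (m+1)^2 * 16^m := Nat.mul_le_mul_left _ ih
        _ = (m+1)^2 * 16^(m+1) := by ring
    exact Nat.le_of_mul_le_mul_left this hpos

/-- `(a+1)^e ≤ b·a^e` whenever `1 ≤ a`, `e ≤ 2a` and `8 ≤ b`. -/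
lemma aux_pow_succ_le (a e b : ℕ) (ha : 1 ≤ a) (he : e ≤ 2*a) (hb : 8 ≤ b) :
    (a+1)^e ≤ b * a^e := by
  have ha' : (0:ℝ) < a := by exact_mod_cast ha
  have h1 : ((a:ℝ)+1)^e ≤ 8 * (a:ℝ)^e := by
    have hr : (a:ℝ)+1 = a * (1 + 1/a) := by field_simp
    have h2 : (1 + 1/(a:ℝ)) ≤ Real.exp (1/a) := by
      have := Real.add_one_le_exp (1/(a:ℝ)); linarith
    have h3 : (1 + 1/(a:ℝ))^e ≤ Real.exp (1/a) ^ e := by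
      apply pow_le_pow_left₀ (by positivity) h2
    have h4 : Real.exp (1/(a:ℝ)) ^ e = Real.exp (e/a) := by
      rw [← Real.exp_nat_mul]; ring_nf
    have h5 : Real.exp ((e:ℝ)/a) ≤ Real.exp 2 := by
      apply Real.exp_le_exp.mpr
      rw [div_le_iff₀ ha']
      have : (e:ℝ) ≤ 2*a := by exact_mod_cast he
      linarith
    have h6 : Real.exp 2 ≤ 8 := by
      have h7 := Real.exp_one_lt_d9
      have : Real.exp 2 = Real.exp 1 * Real.exp 1 := by
        rw [← Real.exp_add]; norm_num
      nlinarith [Real.exp_pos 1]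
    calc ((a:ℝ)+1)^e = (a:ℝ)^e * (1+1/a)^e := by rw [hr, mul_pow]
      _ ≤ (a:ℝ)^e * Real.exp 2 := by
          apply mul_le_mul_of_nonneg_left _ (by positivity)
          exact h3.trans (by rw [h4]; exact h5)
      _ ≤ 8 * (a:ℝ)^e := by nlinarith [pow_pos ha' e]
  have : ((a:ℝ)+1)^e ≤ (b:ℝ) * (a:ℝ)^e := by
    apply h1.trans
    apply mul_le_mul_of_nonneg_right _ (by positivity)
    exact_mod_cast hb
  exact_mod_cast this

/-- Bound for the middle binomial coefficient. -/
lemma aux_middle (N : ℕ) : (N.choose (N/2))^2 * (N+2)^(2*N) ≤ 4^N * (N+1)^(2*N) := by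
  rcases Nat.even_or_odd N with ⟨m, hm⟩ | ⟨m, hm⟩
  · subst hm
    have hhalf : (m + m)/2 = m := by omega
    rw [hhalf]
    have hCB : (m+m).choose m = Nat.centralBinom m := by
      rw [Nat.centralBinom]; ring_nf
    rw [hCB]
    have hL : (2*m+2)^(4*m) ≤ (3*m+1) * (2*m+1)^(4*m) := by
      rcases Nat.lt_or_ge m 3 with h | h
      · interval_cases m <;> norm_num
      · have := aux_pow_succ_le (2*m+1) (4*m) (3*m+1) (by omega) (by omega) (by omega)
        convert this using 2
    calc (Nat.centralBinom m)^2 * (m+m+2)^(2*(m+m))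
        = (Nat.centralBinom m)^2 * (2*m+2)^(4*m) := by ring_nf
      _ ≤ (Nat.centralBinom m)^2 * ((3*m+1) * (2*m+1)^(4*m)) := Nat.mul_le_mul_left _ hL
      _ = ((3*m+1) * (Nat.centralBinom m)^2) * (2*m+1)^(4*m) := by ring
      _ ≤ 16^m * (2*m+1)^(4*m) := Nat.mul_le_mul_right _ (aux_central_binom_sq m)
      _ = 4^(m+m) * (m+m+1)^(2*(m+m)) := by
          rw [show (16:ℕ)^m = 4^(m+m) by rw [show m+m = 2*m by ring, pow_mul]; norm_num]
          ring_nf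
  · subst hm
    have hhalf : (2*m+1)/2 = m := by omega
    rw [hhalf]
    have hdouble : 2 * ((2*m+1).choose m) = Nat.centralBinom (m+1) := by
      rw [Nat.centralBinom, show 2*(m+1) = (2*m+1)+1 by ring, Nat.choose_succ_succ',
        Nat.choose_symm_half]
      ring
    have hL : (2*m+3)^(4*m+2) ≤ (3*m+4) * (2*m+2)^(4*m+2) := by
      rcases Nat.lt_or_ge m 2 with h | h
      · interval_cases m <;> norm_num
      · have := aux_pow_succ_le (2*m+2) (4*m+2) (3*m+4) (by omega) (by omega) (by omega)
        convert this using 2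
    have key : 4 * (((2*m+1).choose m)^2 * (2*m+1+2)^(2*(2*m+1)))
        ≤ 4 * (4^(2*m+1) * (2*m+1+1)^(2*(2*m+1))) := by
      calc 4 * (((2*m+1).choose m)^2 * (2*m+1+2)^(2*(2*m+1)))
          = (2*((2*m+1).choose m))^2 * (2*m+3)^(4*m+2) := by ring_nf
        _ = (Nat.centralBinom (m+1))^2 * (2*m+3)^(4*m+2) := by rw [hdouble]
        _ ≤ (Nat.centralBinom (m+1))^2 * ((3*m+4) * (2*m+2)^(4*m+2)) :=
            Nat.mul_le_mul_left _ hL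
        _ = ((3*(m+1)+1) * (Nat.centralBinom (m+1))^2) * (2*m+2)^(4*m+2) := by ring
        _ ≤ 16^(m+1) * (2*m+2)^(4*m+2) :=
            Nat.mul_le_mul_right _ (aux_central_binom_sq (m+1))
        _ = 4 * (4^(2*m+1) * (2*m+1+1)^(2*(2*m+1))) := by
            rw [show (16:ℕ)^(m+1) = 4^(2*(m+1)) by rw [pow_mul]; norm_num]
            ring_nf
    omega

/-- Termwise inequality in `ℕ`: `C(N,k)²((k+1)(N+1−k))^N ≤ (N+1)^{2N}`. -/
lemma aux_termwise (N k : ℕ) (hk : k ≤ N) :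
    (N.choose k)^2 * ((k+1)*(N+1-k))^N ≤ (N+1)^(2*N) := by
  have hmid : N.choose k ≤ N.choose (N/2) := Nat.choose_le_middle k N
  obtain ⟨x, hx⟩ : ∃ x, N+1-k = x := ⟨_, rfl⟩
  have hxk : x + k = N + 1 := by omega
  rw [hx]
  have hprod : 4*((k+1)*x) ≤ (N+2)^2 := by
    zify; nlinarith [sq_nonneg ((k:ℤ)+1-(x:ℤ)), hxk]
  have key : 4^N * ((N.choose k)^2 * ((k+1)*x)^N) ≤ 4^N * (N+1)^(2*N) := by
    calc 4^N * ((N.choose k)^2 * ((k+1)*x)^N)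
        = (N.choose k)^2 * (4*((k+1)*x))^N := by rw [mul_pow 4 ((k+1)*x) N, mul_left_comm]
      _ ≤ (N.choose (N/2))^2 * ((N+2)^2)^N := by
          exact Nat.mul_le_mul (Nat.pow_le_pow_left hmid 2) (Nat.pow_le_pow_left hprod N)
      _ = (N.choose (N/2))^2 * (N+2)^(2*N) := by rw [← pow_mul, mul_comm 2 N]
      _ ≤ 4^N * (N+1)^(2*N) := aux_middle N
  exact Nat.le_of_mul_le_mul_left key (by positivity)

/-- For every integer `N ≥ 1`,
`N ∑_{k=0}^{N} C(N,k) log₂((N+1)²/((N+1−k)(k+1))) ≥ 2 ∑_{k=0}^{N} C(N,k) log₂ C(N,k)`. -/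
theorem key_inequality (N : ℕ) (hN : 1 ≤ N) :
    (N : ℝ) * ∑ k ∈ Finset.range (N + 1),
        (N.choose k : ℝ) *
          Real.logb 2 (((N : ℝ) + 1) ^ 2 / ((((N : ℝ) + 1) - (k : ℝ)) * ((k : ℝ) + 1)))
      ≥ 2 * ∑ k ∈ Finset.range (N + 1),
          (N.choose k : ℝ) * Real.logb 2 (N.choose k) := by
  rw [ge_iff_le, Finset.mul_sum, Finset.mul_sum]
  apply Finset.sum_le_sum
  intro k hk
  rw [Finset.mem_range] at hk
  have hkN : k ≤ N := by omega
  set C : ℝ := (N.choose k : ℝ) with hC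
  have hC1 : (1:ℝ) ≤ C := by
    have h1 : (1:ℕ) ≤ N.choose k := Nat.choose_pos hkN
    rw [hC]; exact_mod_cast h1
  have hP : (0:ℝ) < (((N:ℝ)+1) - k) * ((k:ℝ)+1) := by
    have : (k:ℝ) ≤ N := by exact_mod_cast hkN
    nlinarith
  set P : ℝ := (((N:ℝ)+1) - k) * ((k:ℝ)+1) with hPdef
  have hcast : P = (((k+1)*(N+1-k) : ℕ) : ℝ) := by
    push_cast [Nat.cast_sub (show k ≤ N+1 by omega)]
    ring
  have hB : C^2 * P^N ≤ (((N:ℝ)+1))^(2*N) := by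
    rw [hcast, hC]
    exact_mod_cast aux_termwise N k hkN
  have hQ : (0:ℝ) < ((N:ℝ)+1)^2 / P := by positivity
  have hCP : C^2 ≤ (((N:ℝ)+1)^2 / P)^N := by
    rw [div_pow, ← pow_mul, le_div_iff₀ (by positivity)]
    exact hB
  have hlog : 2 * Real.logb 2 C ≤ (N:ℝ) * Real.logb 2 (((N:ℝ)+1)^2 / P) := by
    have h1 : Real.logb 2 (C^2) ≤ Real.logb 2 ((((N:ℝ)+1)^2 / P)^N) :=
      Real.logb_le_logb_of_le (by norm_num) (by positivity) hCP
    rwa [Real.logb_pow, Real.logb_pow] at h1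
  have hCnn : (0:ℝ) ≤ C := by linarith
  calc 2 * (C * Real.logb 2 C) = C * (2 * Real.logb 2 C) := by ring
    _ ≤ C * ((N:ℝ) * Real.logb 2 (((N:ℝ)+1)^2 / P)) :=
        mul_le_mul_of_nonneg_left hlog hCnn
    _ = (N:ℝ) * (C * Real.logb 2 (((N:ℝ)+1)^2 / P)) := by ring
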